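/- The operator D maps A into A and maps each W_m into W_m; moreover, for each m ∈ ℤ, the only subspaces of W_m invariant under both D and multiplication by u are 0 and W_m. (Proposition 5.3, part 3: there is an invariant algebraic differential operator of second order on the cone — corresponding to z(∂_x² + ∂_y²) — under which the multiplicity spaces of the SO(2)-rotation action become irreducible.) -/

import Mathlib

/-- The ring `ℂ[u, t, t⁻¹]` of polynomials in `u` that are Laurent polynomials
in `t`, realized as the monoid algebra of `ℕ × ℤ` over `ℂ`. -/
abbrev PolyLaurent : Type := AddMonoidAlgebra ℂ (ℕ × ℤ)

/-- The monomial `uⁿ tᵐ` in `ℂ[u, t, t⁻¹]`. -/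
noncomputable def mono (n : ℕ) (m : ℤ) : PolyLaurent :=
  AddMonoidAlgebra.single (n, m) 1

/-- The coordinate ring `A` of the double cone `z² = x² + y²`: the subalgebra
of `ℂ[u, t, t⁻¹]` generated by `u`, `u·t` and `u·t⁻¹`. -/
noncomputable def coneA : Subalgebra ℂ PolyLaurent :=
  Algebra.adjoin ℂ {mono 1 0, mono 1 1, mono 1 (-1)}

/-- The second-order operator `D` (corresponding to `z(∂_x² + ∂_y²)` on the
cone), determined on monomials by `D(uⁿtᵐ) = (n² − m²)·u^{n−1}tᵐ` for `n ≥ 1`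
and `D(tᵐ) = 0`; equivalently `u·D(f) = ((u∂_u − t∂_t) ∘ (u∂_u + t∂_t))(f)`. -/
noncomputable def Dop : PolyLaurent →ₗ[ℂ] PolyLaurent :=
  (AddMonoidAlgebra.coeffLinearEquiv ℂ).symm.toLinearMap ∘ₗ
  (Finsupp.lsum ℂ fun p : ℕ × ℤ =>
    (if p.1 = 0 then (0 : ℂ) else ((p.1 : ℂ) ^ 2 - (p.2 : ℂ) ^ 2)) •
      Finsupp.lsingle (p.1 - 1, p.2)) ∘ₗ
  (AddMonoidAlgebra.coeffLinearEquiv ℂ).toLinearMap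

/-- `W_m`: the span of the monomials `uⁿtᵐ` with `n ≥ |m|`, i.e. the
weight-`m` space of the rotation action `t ↦ λt` on the coordinate ring of
the cone. -/
noncomputable def coneWm (m : ℤ) : Submodule ℂ PolyLaurent :=
  Submodule.span ℂ {x : PolyLaurent | ∃ n : ℕ, m.natAbs ≤ n ∧ x = mono n m}

lemma mono_mul (a c : ℕ) (b d : ℤ) : mono a b * mono c d = mono (a+c) (b+d) := by
  simp [mono, AddMonoidAlgebra.single_mul_single]

lemma Dop_mono (n : ℕ) (m : ℤ) :
    Dop (mono n m) = (if n = 0 then (0:ℂ) else ((n : ℂ) ^ 2 - (m : ℂ) ^ 2)) • mono (n-1) m := by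
  simp only [Dop, mono, LinearMap.comp_apply, LinearEquiv.coe_coe,
    AddMonoidAlgebra.coeffLinearEquiv_apply, AddMonoidAlgebra.coeff_single, Finsupp.lsum_single,
    LinearMap.smul_apply, Finsupp.lsingle_apply, map_smul,
    AddMonoidAlgebra.coeffLinearEquiv_symm_apply, AddMonoidAlgebra.ofCoeff_single]

lemma mono_pow (k : ℕ) (d : ℤ) : (mono 1 d) ^ k = mono k (k * d) := by
  induction k with
  | zero => simp [mono]; rfl
  | succ k ih => rw [pow_succ, ih, mono_mul]; congr 1; push_cast; ring

lemma mono_zero_zero : mono 0 0 = 1 := rfl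

lemma cast_natAbs_sq (m : ℤ) : ((m.natAbs : ℂ))^2 = (m:ℂ)^2 := by
  have h : ((m.natAbs:ℤ))^2 = m^2 := Int.natAbs_sq m
  have := congrArg (fun z : ℤ => (z:ℂ)) h
  rw [← Int.cast_natCast, ← Int.cast_pow, h, Int.cast_pow]

lemma mono_mem_coneA {n : ℕ} {m : ℤ} (h : m.natAbs ≤ n) : mono n m ∈ coneA := by
  have h10 : mono 1 0 ∈ coneA := Algebra.subset_adjoin (by simp)
  have h11 : mono 1 1 ∈ coneA := Algebra.subset_adjoin (by simp)
  have h1n : mono 1 (-1) ∈ coneA := Algebra.subset_adjoin (by simp)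
  obtain ⟨k, rfl⟩ := Nat.exists_eq_add_of_le h
  rcases Int.natAbs_eq m with hm | hm
  · have : mono (m.natAbs + k) m = (mono 1 1) ^ m.natAbs * (mono 1 0) ^ k := by
      rw [mono_pow, mono_pow, mono_mul]
      congr 1
      omega
    rw [this]; exact mul_mem (pow_mem h11 _) (pow_mem h10 _)
  · have : mono (m.natAbs + k) m = (mono 1 (-1)) ^ m.natAbs * (mono 1 0) ^ k := by
      rw [mono_pow, mono_pow, mono_mul]
      congr 1
      omega
    rw [this]; exact mul_mem (pow_mem h1n _) (pow_mem h10 _)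

def GS : Set PolyLaurent := {x | ∃ n : ℕ, ∃ m : ℤ, m.natAbs ≤ n ∧ x = mono n m}

lemma coneA_le_span : ∀ a ∈ coneA, a ∈ Submodule.span ℂ GS := by
  have hmul : ∀ x ∈ Submodule.span ℂ GS, ∀ y ∈ Submodule.span ℂ GS,
      x * y ∈ Submodule.span ℂ GS := by
    intro x hx y hy
    have h2 : Submodule.span ℂ GS * Submodule.span ℂ GS ≤ Submodule.span ℂ GS := by
      rw [Submodule.span_mul_span]
      apply Submodule.span_le.2
      rintro z ⟨a, ha, b, hb, rfl⟩
      rcases ha with ⟨n1, m1, h1, rfl⟩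
      rcases hb with ⟨n2, m2, h2, rfl⟩
      apply Submodule.subset_span
      exact ⟨n1 + n2, m1 + m2, by have := Int.natAbs_add_le m1 m2; omega,
        by simpa using mono_mul n1 n2 m1 m2⟩
    exact h2 (Submodule.mul_mem_mul hx hy)
  intro a ha
  induction ha using Algebra.adjoin_induction with
  | mem x hx =>
      apply Submodule.subset_span
      rcases hx with h | h | h
      · exact ⟨1, 0, by norm_num, h⟩
      · exact ⟨1, 1, by norm_num, h⟩
      · exact ⟨1, -1, by norm_num, h⟩
  | algebraMap r =>
      rw [Algebra.algebraMap_eq_smul_one, ← mono_zero_zero]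
      exact Submodule.smul_mem _ _ (Submodule.subset_span ⟨0, 0, le_refl _, rfl⟩)
  | add x y _ _ hx hy => exact Submodule.add_mem _ hx hy
  | mul x y _ _ hx hy => exact hmul _ hx _ hy

lemma Dop_good {n : ℕ} {m : ℤ} (h : m.natAbs ≤ n) :
    Dop (mono n m) ∈ Submodule.span ℂ GS := by
  rw [Dop_mono]
  by_cases hn : m.natAbs = n
  · have hc : (if n = 0 then (0:ℂ) else ((n : ℂ) ^ 2 - (m : ℂ) ^ 2)) = 0 := by
      by_cases h0 : n = 0
      · simp [h0]
      · rw [if_neg h0, ← hn, cast_natAbs_sq]; ring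
    rw [hc, zero_smul]; exact Submodule.zero_mem _
  · exact Submodule.smul_mem _ _
      (Submodule.subset_span ⟨n - 1, m, by omega, rfl⟩)

lemma Dop_span_GS : ∀ a ∈ Submodule.span ℂ GS, Dop a ∈ Submodule.span ℂ GS := by
  intro a h1
  induction h1 using Submodule.span_induction with
  | mem x hx => rcases hx with ⟨n, m, h, rfl⟩; exact Dop_good h
  | zero => simp
  | add x y _ _ hx hy => rw [map_add]; exact Submodule.add_mem _ hx hy
  | smul c x _ hx => rw [map_smul]; exact Submodule.smul_mem _ _ hx

lemma part1 : ∀ a ∈ coneA, Dop a ∈ coneA := by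
  intro a ha
  have hS : Submodule.span ℂ GS ≤ Subalgebra.toSubmodule coneA := by
    apply Submodule.span_le.2
    rintro x ⟨n, m, h, rfl⟩
    exact mono_mem_coneA h
  exact hS (Dop_span_GS a (coneA_le_span a ha))

lemma coef_ne {a b : ℕ} (h : b < a) : ((a:ℂ)^2 - (b:ℂ)^2) ≠ 0 := by
  intro hc
  have h1 : ((a:ℂ))^2 = ((b:ℂ))^2 := by
    have := sub_eq_zero.1 hc
    linear_combination this
  have h2 : (a^2 : ℕ) = (b^2 : ℕ) := by exact_mod_cast h1
  have h3 : b^2 < a^2 := Nat.pow_lt_pow_left h (by norm_num)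
  omega

lemma Dop_mono_ge {n : ℕ} {m : ℤ} (h : m.natAbs < n) :
    Dop (mono n m) = (((n:ℂ)^2 - (m:ℂ)^2)) • mono (n-1) m ∧ ((n:ℂ)^2 - (m:ℂ)^2) ≠ 0 := by
  constructor
  · rw [Dop_mono, if_neg (by omega)]
  · rw [← cast_natAbs_sq]
    exact coef_ne h

lemma part2 (m : ℤ) : ∀ x ∈ coneWm m, Dop x ∈ coneWm m := by
  intro x hx
  induction hx using Submodule.span_induction with
  | mem x hx =>
      rcases hx with ⟨n, h, rfl⟩
      rw [Dop_mono]
      by_cases hn : m.natAbs = n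
      · have hc : (if n = 0 then (0:ℂ) else ((n : ℂ) ^ 2 - (m : ℂ) ^ 2)) = 0 := by
          by_cases h0 : n = 0
          · simp [h0]
          · rw [if_neg h0, ← hn, cast_natAbs_sq]; ring
        rw [hc, zero_smul]; exact Submodule.zero_mem _
      · exact Submodule.smul_mem _ _
          (Submodule.subset_span ⟨n - 1, by omega, rfl⟩)
  | zero => simp
  | add x y _ _ hx hy => rw [map_add]; exact Submodule.add_mem _ hx hy
  | smul c x _ hx => rw [map_smul]; exact Submodule.smul_mem _ _ hx

lemma part3 (m : ℤ) (p : Submodule ℂ PolyLaurent) (hple : p ≤ coneWm m)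
    (hD : ∀ x ∈ p, Dop x ∈ p) (hu : ∀ x ∈ p, mono 1 0 * x ∈ p) :
    p = ⊥ ∨ p = coneWm m := by
  by_cases hbot : p = ⊥
  · exact Or.inl hbot
  right
  set v : ℕ → PolyLaurent := fun n => if m.natAbs ≤ n then mono n m else 0 with hv
  set lam : ℕ → ℂ := fun k => ((2*k+1 : ℕ) : ℂ) with hlam
  have hlaminj : ∀ k l : ℕ, lam k = lam l → k = l := by
    intro k l hkl
    simp only [hlam] at hkl
    have : (2*k+1 : ℕ) = (2*l+1 : ℕ) := by exact_mod_cast hkl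
    omega
  have hE : ∀ n : ℕ, Dop (mono 1 0 * v n) - mono 1 0 * Dop (v n) = lam n • v n := by
    intro n
    by_cases h : m.natAbs ≤ n
    · simp only [hv, if_pos h]
      have e1 : mono 1 0 * mono n m = mono (n+1) m := by
        rw [mono_mul]; congr 1 <;> omega
      have e2 : Dop (mono (n+1) m) = (((n+1:ℕ):ℂ)^2 - (m:ℂ)^2) • mono n m := by
        rw [Dop_mono, if_neg (Nat.succ_ne_zero n)]
        norm_num
      by_cases h0 : n = 0
      · subst h0
        have hm0 : m = 0 := by omega
        subst hm0
        rw [e1, e2, Dop_mono, if_pos rfl, zero_smul, mul_zero, sub_zero, hlam]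
        norm_num
      · have e3 : Dop (mono n m) = ((n:ℂ)^2 - (m:ℂ)^2) • mono (n-1) m := by
          rw [Dop_mono, if_neg h0]
        have e4 : mono 1 0 * mono (n-1) m = mono n m := by
          rw [mono_mul]; congr 1 <;> omega
        rw [e1, e2, e3, mul_smul_comm, e4, ← sub_smul, hlam]
        congr 1
        push_cast
        ring
    · simp [hv, if_neg h]
  have extract : ∀ F : Finset ℕ, ∀ c : ℕ → ℂ, (∑ n ∈ F, c n • v n) ∈ p →
      ∀ n ∈ F, c n • v n ∈ p := by
    intro F
    induction F using Finset.induction_on with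
    | empty => intro c _ n hn; exact absurd hn (Finset.notMem_empty n)
    | @insert a s ha ih =>
      intro c hx n hn
      have hEx : Dop (mono 1 0 * (∑ k ∈ insert a s, c k • v k))
          - mono 1 0 * Dop (∑ k ∈ insert a s, c k • v k) ∈ p :=
        sub_mem (hD _ (hu _ hx)) (hu _ (hD _ hx))
      have hExeq : Dop (mono 1 0 * (∑ k ∈ insert a s, c k • v k))
          - mono 1 0 * Dop (∑ k ∈ insert a s, c k • v k)
          = ∑ k ∈ insert a s, c k • (lam k • v k) := by
        have h1 : mono 1 0 * (∑ k ∈ insert a s, c k • v k)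
            = ∑ k ∈ insert a s, c k • (mono 1 0 * v k) := by
          rw [Finset.mul_sum]
          exact Finset.sum_congr rfl fun k _ => mul_smul_comm _ _ _
        have h2 : mono 1 0 * Dop (∑ k ∈ insert a s, c k • v k)
            = ∑ k ∈ insert a s, c k • (mono 1 0 * Dop (v k)) := by
          rw [map_sum, Finset.mul_sum]
          refine Finset.sum_congr rfl fun k _ => ?_
          rw [map_smul, mul_smul_comm]
        rw [h1, map_sum, h2, ← Finset.sum_sub_distrib]
        refine Finset.sum_congr rfl fun k _ => ?_
        rw [map_smul, ← smul_sub, hE k]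
      have hy : (∑ k ∈ insert a s, ((lam k - lam a) * c k) • v k) ∈ p := by
        have heq : (∑ k ∈ insert a s, ((lam k - lam a) * c k) • v k)
            = (Dop (mono 1 0 * (∑ k ∈ insert a s, c k • v k))
              - mono 1 0 * Dop (∑ k ∈ insert a s, c k • v k))
              - lam a • (∑ k ∈ insert a s, c k • v k) := by
          rw [hExeq, Finset.smul_sum, ← Finset.sum_sub_distrib]
          refine Finset.sum_congr rfl fun k _ => ?_
          rw [smul_smul, smul_smul, ← sub_smul]
          congr 1
          ring
        rw [heq]
        exact sub_mem hEx (Submodule.smul_mem _ _ hx)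
      have hy2 : (∑ k ∈ s, ((lam k - lam a) * c k) • v k) ∈ p := by
        have e : ∑ k ∈ insert a s, ((lam k - lam a) * c k) • v k
            = ∑ k ∈ s, ((lam k - lam a) * c k) • v k := by
          rw [Finset.sum_insert ha]
          simp
        rwa [e] at hy
      have hs : ∀ k ∈ s, c k • v k ∈ p := by
        intro k hk
        have h1 := ih (fun k => (lam k - lam a) * c k) hy2 k hk
        have hne : lam k - lam a ≠ 0 :=
          sub_ne_zero.2 fun hc => ha ((hlaminj k a hc) ▸ hk)
        have e : c k • v k = (lam k - lam a)⁻¹ • (((lam k - lam a) * c k) • v k) := by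
          rw [smul_smul, ← mul_assoc, inv_mul_cancel₀ hne, one_mul]
        rw [e]
        exact Submodule.smul_mem _ _ h1
      rcases Finset.mem_insert.1 hn with rfl | hns
      · have e : c n • v n = (∑ k ∈ insert n s, c k • v k) - ∑ k ∈ s, c k • v k := by
          rw [Finset.sum_insert ha]
          exact (add_sub_cancel_right _ _).symm
        rw [e]
        exact sub_mem hx (Submodule.sum_mem _ hs)
      · exact hs n hns
  obtain ⟨x, hxp, hx0⟩ := (Submodule.ne_bot_iff p).1 hbot
  have hxspan : x ∈ Submodule.span ℂ (Set.range v) := by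
    refine Submodule.span_le.2 ?_ (hple hxp)
    rintro y ⟨n, hn, rfl⟩
    exact Submodule.subset_span ⟨n, by simp [hv, if_pos hn]⟩
  obtain ⟨c, hc⟩ := (Finsupp.mem_span_range_iff_exists_finsupp).1 hxspan
  have hxsum : x = ∑ k ∈ c.support, c k • v k := by
    rw [← hc]; rfl
  have hallterms : ∀ k ∈ c.support, c k • v k ∈ p := by
    intro k hk
    exact extract c.support c (by rw [← hxsum]; exact hxp) k hk
  have hnz : ∃ k ∈ c.support, c k • v k ≠ 0 := by
    by_contra hcon
    push_neg at hcon
    exact hx0 (by rw [hxsum]; exact Finset.sum_eq_zero hcon)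
  obtain ⟨k0, hk0s, hk0⟩ := hnz
  have hck0 : c k0 ≠ 0 := fun h => hk0 (by simp [h])
  have hvk0 : m.natAbs ≤ k0 := by
    by_contra h
    exact hk0 (by simp [hv, if_neg h])
  have hmono : mono k0 m ∈ p := by
    have h1 := Submodule.smul_mem p (c k0)⁻¹ (hallterms k0 hk0s)
    rw [smul_smul, inv_mul_cancel₀ hck0, one_smul] at h1
    have e : v k0 = mono k0 m := by simp [hv, if_pos hvk0]
    rwa [e] at h1
  have hup : ∀ j, mono (k0 + j) m ∈ p := by
    intro j
    induction j with
    | zero => simpa using hmono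
    | succ j ih =>
      have h1 := hu _ ih
      have e : mono 1 0 * mono (k0+j) m = mono (k0+(j+1)) m := by
        rw [mono_mul]; congr 1 <;> omega
      rwa [e] at h1
  have hdown : ∀ i, m.natAbs + i ≤ k0 → mono (k0 - i) m ∈ p := by
    intro i
    induction i with
    | zero => intro _; simpa using hmono
    | succ i ih =>
      intro hi
      have h1 : mono (k0 - i) m ∈ p := ih (by omega)
      have h2 := hD _ h1
      have hlt : m.natAbs < k0 - i := by omega
      obtain ⟨he, hne⟩ := Dop_mono_ge hlt
      rw [he] at h2
      have h3 := Submodule.smul_mem p ((((k0-i:ℕ)):ℂ)^2 - (m:ℂ)^2)⁻¹ h2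
      rw [smul_smul, inv_mul_cancel₀ hne, one_smul] at h3
      have e : k0 - i - 1 = k0 - (i+1) := by omega
      rwa [e] at h3
  have hall : ∀ k, m.natAbs ≤ k → mono k m ∈ p := by
    intro k hk
    rcases le_or_gt k0 k with h | h
    · have h1 := hup (k - k0)
      rwa [Nat.add_sub_cancel' h] at h1
    · have h1 := hdown (k0 - k) (by omega)
      rwa [show k0 - (k0 - k) = k by omega] at h1
  refine le_antisymm hple ?_
  refine Submodule.span_le.2 ?_
  rintro y ⟨n, hn, rfl⟩
  exact hall n hn


/-- **Proposition 5.3, part 3.**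
The invariant second-order operator `D` maps `A` into `A` and each `W_m` into
`W_m`; moreover, for each `m ∈ ℤ`, the only subspaces of `W_m` invariant under
both `D` and multiplication by `u` are `0` and `W_m`. -/
theorem cone_rotation_multiplicity_spaces_irreducible :
    (∀ a ∈ coneA, Dop a ∈ coneA) ∧
    (∀ m : ℤ, ∀ x ∈ coneWm m, Dop x ∈ coneWm m) ∧
    (∀ m : ℤ, ∀ p : Submodule ℂ PolyLaurent, p ≤ coneWm m →
      (∀ x ∈ p, Dop x ∈ p) → (∀ x ∈ p, mono 1 0 * x ∈ p) →
      p = ⊥ ∨ p = coneWm m) := by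
  exact ⟨part1, part2, part3⟩
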